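/- For the barbell graph B_n (n ≥ 3), obtained by joining a vertex v₁ of one copy of K_n to a vertex v₂ of a disjoint copy of K_n by a single edge, the minimizing subsets of the function S ↦ |S| + 2n - c(S) are exactly ∅, {v₁}, and {v₂}, all attaining the value 2n - 1. -/

import Mathlib

noncomputable def numComp {V : Type} (G : SimpleGraph V) (S : Finset V) : ℕ :=
  Nat.card ((G.induce ((S : Set V))ᶜ).ConnectedComponent)

/-- The barbell graph `B_n`: two disjoint copies of `K_n` (on `Sum.inl` and
`Sum.inr` vertices) joined by the single edge `{v₁, v₂} = {inl 0, inr 0}`. -/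
def barbellGraph (n : ℕ) [NeZero n] : SimpleGraph (Fin n ⊕ Fin n) :=
  SimpleGraph.fromRel (fun a b =>
    (∃ i j, a = Sum.inl i ∧ b = Sum.inl j) ∨
    (∃ i j, a = Sum.inr i ∧ b = Sum.inr j) ∨
    (a = Sum.inl 0 ∧ b = Sum.inr 0))

namespace BarbellAux

open SimpleGraph Sum

variable {n : ℕ} [NeZero n]

lemma adj_inl {i j : Fin n} (h : i ≠ j) : (barbellGraph n).Adj (inl i) (inl j) := by
  rw [barbellGraph, SimpleGraph.fromRel_adj]
  exact ⟨by simpa using h, Or.inl (Or.inl ⟨i, j, rfl, rfl⟩)⟩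

lemma adj_inr {i j : Fin n} (h : i ≠ j) : (barbellGraph n).Adj (inr i) (inr j) := by
  rw [barbellGraph, SimpleGraph.fromRel_adj]
  exact ⟨by simpa using h, Or.inl (Or.inr (Or.inl ⟨i, j, rfl, rfl⟩))⟩

lemma adj_bridge : (barbellGraph n).Adj (inl 0) (inr 0) := by
  rw [barbellGraph, SimpleGraph.fromRel_adj]
  exact ⟨by simp, Or.inl (Or.inr (Or.inr ⟨rfl, rfl⟩))⟩

lemma cross_eq {i j : Fin n} (h : (barbellGraph n).Adj (inl i) (inr j)) :
    i = 0 ∧ j = 0 := by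
  rw [barbellGraph, SimpleGraph.fromRel_adj] at h
  rcases h.2 with (h | h | h) | (h | h | h) <;> simp_all

lemma adj_side {a b : Fin n ⊕ Fin n} (h : (barbellGraph n).Adj a b)
    (hab : a.isLeft ≠ b.isLeft) :
    (a = inl 0 ∧ b = inr 0) ∨ (a = inr 0 ∧ b = inl 0) := by
  rcases a with i | i <;> rcases b with j | j <;> simp_all
  · obtain ⟨h1, h2⟩ := cross_eq h
    exact ⟨h1, h2⟩
  · obtain ⟨h1, h2⟩ := cross_eq h.symm
    exact ⟨h2, h1⟩

variable (S : Finset (Fin n ⊕ Fin n))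

abbrev cmpl : Set (Fin n ⊕ Fin n) := ((S : Set (Fin n ⊕ Fin n)))ᶜ

abbrev CG := (barbellGraph n).induce (cmpl S)

/-- same side vertices in the complement are reachable -/
lemma reach_same_side (x y : cmpl S)
    (h : (x : Fin n ⊕ Fin n).isLeft = (y : Fin n ⊕ Fin n).isLeft) :
    (CG S).Reachable x y := by
  by_cases hxy : (x : Fin n ⊕ Fin n) = (y : Fin n ⊕ Fin n)
  · have : x = y := Subtype.ext hxy
    exact this ▸ Reachable.refl x
  · apply Adj.reachable
    show (barbellGraph n).Adj (x : Fin n ⊕ Fin n) (y : Fin n ⊕ Fin n)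
    obtain ⟨i | i, hx⟩ := x <;> obtain ⟨j | j, hy⟩ := y <;> simp_all
    · exact adj_inl (by simpa using hxy)
    · exact adj_inr (by simpa using hxy)

lemma numComp_le_two : numComp (barbellGraph n) S ≤ 2 := by
  have key : Function.Injective
      (fun c : (CG S).ConnectedComponent =>
        ((Quot.exists_rep c).choose : Fin n ⊕ Fin n).isLeft) := by
    intro c d h
    obtain hc := (Quot.exists_rep c).choose_spec
    obtain hd := (Quot.exists_rep d).choose_spec
    rw [← hc, ← hd]
    exact ConnectedComponent.sound (reach_same_side S _ _ h)
  calc numComp (barbellGraph n) S ≤ Nat.card Bool :=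
        Nat.card_le_card_of_injective _ key
    _ = 2 := by simp [Nat.card_eq_fintype_card]

lemma numComp_eq_one (h1 : inl 0 ∉ S) (h2 : inr 0 ∉ S) :
    numComp (barbellGraph n) S = 1 := by
  rw [numComp, Nat.card_eq_one_iff_unique]
  have hv1 : (inl 0 : Fin n ⊕ Fin n) ∈ cmpl S := by simpa
  have hv2 : (inr 0 : Fin n ⊕ Fin n) ∈ cmpl S := by simpa
  constructor
  · constructor
    intro c d
    have key : ∀ x : cmpl S,
        (CG S).connectedComponentMk x = (CG S).connectedComponentMk ⟨inl 0, hv1⟩ := by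
      intro x
      apply ConnectedComponent.sound
      rcases hx : (x : Fin n ⊕ Fin n) with i | i
      · exact reach_same_side S _ _ (by simp [hx])
      · refine (reach_same_side S x ⟨inr 0, hv2⟩ (by simp [hx])).trans (Adj.reachable ?_)
        show (barbellGraph n).Adj (inr 0) (inl 0)
        exact adj_bridge.symm
    obtain ⟨x, hx⟩ := Quot.exists_rep c
    obtain ⟨y, hy⟩ := Quot.exists_rep d
    rw [← hx, ← hy]
    show (CG S).connectedComponentMk x = (CG S).connectedComponentMk y
    rw [key x, key y]
  · exact ⟨(CG S).connectedComponentMk ⟨inl 0, hv1⟩⟩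

/-- with a bridge endpoint removed, reachability preserves sides -/
lemma reach_side_eq (hS : inl 0 ∈ S ∨ inr 0 ∈ S) (x y : cmpl S)
    (h : (CG S).Reachable x y) :
    (x : Fin n ⊕ Fin n).isLeft = (y : Fin n ⊕ Fin n).isLeft := by
  obtain ⟨w⟩ := h
  induction w with
  | nil => rfl
  | cons hadj _ ih =>
    rename_i a b c _
    refine Eq.trans ?_ ih
    by_contra hne
    have hadj' : (barbellGraph n).Adj (a : Fin n ⊕ Fin n) (b : Fin n ⊕ Fin n) := hadj
    rcases adj_side hadj' hne with ⟨ha, hb⟩ | ⟨ha, hb⟩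
    · rcases hS with hS | hS
      · exact a.2 (by rw [ha]; simpa using hS)
      · exact b.2 (by rw [hb]; simpa using hS)
    · rcases hS with hS | hS
      · exact b.2 (by rw [hb]; simpa using hS)
      · exact a.2 (by rw [ha]; simpa using hS)

lemma numComp_eq_two (hS : inl 0 ∈ S ∨ inr 0 ∈ S)
    (hL : ∃ i, inl i ∉ S) (hR : ∃ j, inr j ∉ S) :
    numComp (barbellGraph n) S = 2 := by
  rw [numComp]
  have hbij : Function.Bijective
      (fun c : (CG S).ConnectedComponent =>
        ((Quot.exists_rep c).choose : Fin n ⊕ Fin n).isLeft) := by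
    constructor
    · intro c d h
      obtain hc := (Quot.exists_rep c).choose_spec
      obtain hd := (Quot.exists_rep d).choose_spec
      rw [← hc, ← hd]
      exact ConnectedComponent.sound (reach_same_side S _ _ h)
    · intro b
      obtain ⟨i, hi⟩ := hL
      obtain ⟨j, hj⟩ := hR
      have hi' : (inl i : Fin n ⊕ Fin n) ∈ cmpl S := by simpa
      have hj' : (inr j : Fin n ⊕ Fin n) ∈ cmpl S := by simpa
      cases b
      · refine ⟨(CG S).connectedComponentMk ⟨inr j, hj'⟩, ?_⟩
        have := (Quot.exists_rep ((CG S).connectedComponentMk ⟨inr j, hj'⟩)).choose_spec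
        have hr := reach_side_eq S hS _ ⟨inr j, hj'⟩ (ConnectedComponent.eq.mp this)
        simpa using hr
      · refine ⟨(CG S).connectedComponentMk ⟨inl i, hi'⟩, ?_⟩
        have := (Quot.exists_rep ((CG S).connectedComponentMk ⟨inl i, hi'⟩)).choose_spec
        have hr := reach_side_eq S hS _ ⟨inl i, hi'⟩ (ConnectedComponent.eq.mp this)
        simpa using hr
  rw [Nat.card_eq_of_bijective _ hbij]
  simp [Nat.card_eq_fintype_card]

end BarbellAux

open Sum in
/-- For the barbell graph `B_n` (`n ≥ 3`), the minimizers of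
`S ↦ |S| + 2n - c(S)` are exactly `∅`, `{v₁}`, `{v₂}`, all attaining the
minimum value `2n - 1`. -/
theorem stmt15 (n : ℕ) [NeZero n] (hn : 3 ≤ n) :
    (∀ S : Finset (Fin n ⊕ Fin n),
      2 * (n : ℤ) - 1 ≤ (S.card : ℤ) + 2 * n - numComp (barbellGraph n) S) ∧
    (∀ S : Finset (Fin n ⊕ Fin n),
      (S.card : ℤ) + 2 * n - numComp (barbellGraph n) S = 2 * (n : ℤ) - 1 ↔
        S = ∅ ∨ S = {Sum.inl 0} ∨ S = {Sum.inr 0}) := by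
  have h01 : (0 : Fin n) ≠ 1 := by
    have : (1 : ℕ) < n := by omega
    simp [Fin.ext_iff, Fin.val_one', Nat.mod_eq_of_lt this]
  have hempty : numComp (barbellGraph n) (∅ : Finset (Fin n ⊕ Fin n)) = 1 :=
    BarbellAux.numComp_eq_one _ (by simp) (by simp)
  have hl : numComp (barbellGraph n) {inl 0} = 2 := by
    refine BarbellAux.numComp_eq_two _ (Or.inl (by simp)) ⟨1, by simp [h01.symm]⟩ ⟨0, by simp⟩
  have hr : numComp (barbellGraph n) {inr 0} = 2 := by
    refine BarbellAux.numComp_eq_two _ (Or.inr (by simp)) ⟨0, by simp⟩ ⟨1, by simp [h01.symm]⟩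
  have key : ∀ S : Finset (Fin n ⊕ Fin n), S ≠ ∅ → S ≠ {inl 0} → S ≠ {inr 0} →
      numComp (barbellGraph n) S ≤ S.card := by
    intro S hS h1 h2
    rcases Nat.lt_or_ge S.card 2 with hc | hc
    · interval_cases h : S.card
      · exact absurd (Finset.card_eq_zero.mp h) hS
      · obtain ⟨v, hv⟩ := Finset.card_eq_one.mp h
        subst hv
        have hv1 : inl 0 ∉ ({v} : Finset (Fin n ⊕ Fin n)) := by
          simp; rintro rfl; exact h1 rfl
        have hv2 : inr 0 ∉ ({v} : Finset (Fin n ⊕ Fin n)) := by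
          simp; rintro rfl; exact h2 rfl
        rw [BarbellAux.numComp_eq_one _ hv1 hv2]
    · exact le_trans (BarbellAux.numComp_le_two S) hc
  constructor
  · intro S
    by_cases hS : S = ∅
    · subst hS; simp [hempty]
    by_cases h1 : S = {inl 0}
    · subst h1; simp [hl]; omega
    by_cases h2 : S = {inr 0}
    · subst h2; simp [hr]; omega
    have := key S hS h1 h2
    have hcard : 1 ≤ S.card := Finset.card_pos.mpr (Finset.nonempty_of_ne_empty hS)
    omega
  · intro S
    constructor
    · intro h
      by_contra hcon
      push_neg at hcon
      obtain ⟨hS, h1, h2⟩ := hcon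
      have := key S hS.ne_empty h1 h2
      have hcard : 1 ≤ S.card := Finset.card_pos.mpr (Finset.nonempty_of_ne_empty hS.ne_empty)
      omega
    · rintro (rfl | rfl | rfl)
      · simp [hempty]
      · simp [hl]; ring
      · simp [hr]; ring
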